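/- Let n ≥ 3 be an integer and a > c > 0 reals. Define v^seq(s) = (a-c)²·Σ_{j=1}^{n-s} f_{n,s}(j)/(4(j+1)) for 1 ≤ s ≤ n-1 and v^seq(n) = (a-c)²/4. Then the core of the Stackelberg game (Fin n, v^seq) is empty: there is no x : Fin n → ℝ with Σ_{i} x_i = (a-c)²/4 and Σ_{i∈S} x_i ≥ v^seq(|S|) for every nonempty S ⊆ Fin n. -/

import Mathlib

/-- Stirling number of the second kind (as a real number):
`K m j = (1/j!) · Σ_{i=0}^{j} (-1)^i · C(j,i) · (j-i)^m`. -/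
noncomputable def K (m j : ℕ) : ℝ :=
  (1 / (Nat.factorial j : ℝ)) *
    ∑ i ∈ Finset.range (j + 1), (-1 : ℝ) ^ i * (Nat.choose j i : ℝ) * ((j - i : ℕ) : ℝ) ^ m

noncomputable def S (m j : ℕ) : ℝ :=
  ∑ i ∈ Finset.range (j + 1), (-1 : ℝ) ^ i * (Nat.choose j i : ℝ) * ((j - i : ℕ) : ℝ) ^ m

lemma K_eq (m j : ℕ) : K m j = (1 / (Nat.factorial j : ℝ)) * S m j := rfl

lemma S_rec (m t : ℕ) :
    S (m + 1) (t + 1) = (t + 1) * S m (t + 1) + (t + 1) * S m t := by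
  have h1 : S (m + 1) (t + 1)
      = ∑ i ∈ Finset.range (t + 2),
          (-1 : ℝ) ^ i * (Nat.choose (t+1) i : ℝ) * (((t+1 : ℕ) : ℝ) - i) * ((t + 1 - i : ℕ) : ℝ) ^ m := by
    unfold S
    refine Finset.sum_congr rfl fun i hi => ?_
    have hi' : i ≤ t + 1 := Nat.lt_succ_iff.mp (Finset.mem_range.mp hi)
    have : ((t + 1 - i : ℕ) : ℝ) = ((t+1 : ℕ) : ℝ) - i := by
      push_cast [Nat.cast_sub hi']; ring
    rw [pow_succ']
    rw [this]; ring
  rw [h1]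
  have h2 : ∀ i ∈ Finset.range (t + 2),
      (-1 : ℝ) ^ i * (Nat.choose (t+1) i : ℝ) * (((t+1 : ℕ) : ℝ) - i) * ((t + 1 - i : ℕ) : ℝ) ^ m
      = ((t:ℝ)+1) * ((-1 : ℝ) ^ i * (Nat.choose (t+1) i : ℝ) * ((t + 1 - i : ℕ) : ℝ) ^ m)
        - (-1 : ℝ) ^ i * ((i : ℝ) * (Nat.choose (t+1) i : ℝ)) * ((t + 1 - i : ℕ) : ℝ) ^ m := by
    intro i hi; push_cast; ring
  rw [Finset.sum_congr rfl h2, Finset.sum_sub_distrib, ← Finset.mul_sum]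
  have h3 : (∑ i ∈ Finset.range (t + 2),
      (-1 : ℝ) ^ i * ((i : ℝ) * (Nat.choose (t+1) i : ℝ)) * ((t + 1 - i : ℕ) : ℝ) ^ m)
      = - ((t:ℝ)+1) * S m t := by
    rw [Finset.sum_range_succ']
    simp only [Nat.cast_zero, zero_mul, mul_zero, zero_mul, add_zero]
    have : ∀ k : ℕ, (-1 : ℝ) ^ (k+1) * (((k+1 : ℕ):ℝ) * (Nat.choose (t+1) (k+1) : ℝ)) * ((t + 1 - (k+1) : ℕ) : ℝ) ^ m
        = - ((t:ℝ)+1) * ((-1 : ℝ) ^ k * (Nat.choose t k : ℝ) * ((t - k : ℕ) : ℝ) ^ m) := by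
      intro k
      have hch : ((t+1) * Nat.choose t k : ℕ) = (Nat.choose (t+1) (k+1) * (k+1) : ℕ) :=
        Nat.add_one_mul_choose_eq t k
      have hch' : ((t:ℝ)+1) * (Nat.choose t k : ℝ) = (Nat.choose (t+1) (k+1) : ℝ) * ((k:ℝ)+1) := by
        exact_mod_cast congrArg (Nat.cast : ℕ → ℝ) hch
      have hsub : (t + 1 - (k+1) : ℕ) = (t - k : ℕ) := by omega
      rw [hsub, pow_succ]
      push_cast
      linear_combination ((-1:ℝ)^k * ((t - k : ℕ) : ℝ)^m) * hch'
    rw [Finset.sum_congr rfl fun k _ => this k]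
    rw [← Finset.mul_sum]
    rfl
  rw [h3]
  unfold S
  ring_nf

lemma K_rec (m t : ℕ) : K (m + 1) (t + 1) = (t + 1) * K m (t + 1) + K m t := by
  have hf : (Nat.factorial (t+1) : ℝ) = ((t:ℝ)+1) * (Nat.factorial t : ℝ) := by
    rw [Nat.factorial_succ]; push_cast; ring
  have hf0 : (Nat.factorial t : ℝ) ≠ 0 := Nat.cast_ne_zero.mpr (Nat.factorial_ne_zero t)
  have ht0 : ((t:ℝ)+1) ≠ 0 := by positivity
  rw [K_eq, K_eq, K_eq, S_rec, hf]
  field_simp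

lemma K_zero_right (m : ℕ) : K m 0 = ((0:ℕ):ℝ) ^ m := by
  simp [K]

lemma K_nonneg (m j : ℕ) : 0 ≤ K m j := by
  induction m generalizing j with
  | zero =>
    have : K 0 j = (1 / (Nat.factorial j : ℝ)) * (if j = 0 then 1 else 0) := by
      rw [K_eq]
      congr 1
      unfold S
      have := Int.alternating_sum_range_choose (n := j)
      have h2 : ((∑ i ∈ Finset.range (j + 1), (-1:ℤ) ^ i * (Nat.choose j i : ℤ) : ℤ) : ℝ)
          = ((if j = 0 then (1:ℤ) else 0 : ℤ) : ℝ) := congrArg _ this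
      push_cast at h2
      simpa using h2
    rw [this]
    positivity
  | succ m ih =>
    match j with
    | 0 => rw [K_zero_right]; positivity
    | t + 1 =>
      rw [K_rec]
      have h1 := ih (t+1)
      have h2 := ih t
      positivity

lemma K_one (m : ℕ) (hm : 1 ≤ m) : K m 1 = 1 := by
  unfold K
  rw [Finset.sum_range_succ, Finset.sum_range_succ]
  simp [Nat.factorial, zero_pow (by omega : m ≠ 0)]

/-- Bell number `B m = Σ_{j=1}^{m} K m j`. -/
noncomputable def B (m : ℕ) : ℝ := ∑ j ∈ Finset.Icc 1 m, K m j

/-- Uniform partition distribution: `f n s j = K (n-s) j / B (n-s)`. -/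
noncomputable def f (n s j : ℕ) : ℝ := K (n - s) j / B (n - s)

/-- `F n s = Σ_{j=1}^{n-s} j · f n s j / (j+1)`. -/
noncomputable def F (n s : ℕ) : ℝ :=
  ∑ j ∈ Finset.Icc 1 (n - s), (j : ℝ) * f n s j / ((j : ℝ) + 1)

/-- Value of a coalition of size `s` in the `n`-firm uniform-distribution game:
`v^n(n) = (a-c)²/4`, `v^n(0) = 0`, and for `1 ≤ s ≤ n-1`,
`v^n(s) = (a-c)² · (1-F)/(2-F)² · Σ_{j=1}^{n-s} f n s j / (j+1)`. -/
noncomputable def v (a c : ℝ) (n s : ℕ) : ℝ :=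
  if s = n then (a - c) ^ 2 / 4
  else if s = 0 then 0
  else (a - c) ^ 2 * ((1 - F n s) / (2 - F n s) ^ 2) *
    ∑ j ∈ Finset.Icc 1 (n - s), f n s j / ((j : ℝ) + 1)

/-- Stackelberg value function: `v^seq(n) = (a-c)²/4` and, for `s < n`,
`v^seq(s) = (a-c)² · Σ_{j=1}^{n-s} f n s j / (4(j+1))`. -/
noncomputable def vseq (a c : ℝ) (n s : ℕ) : ℝ :=
  if s = n then (a - c) ^ 2 / 4
  else (a - c) ^ 2 * ∑ j ∈ Finset.Icc 1 (n - s), f n s j / (4 * ((j : ℝ) + 1))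

/-- for `n ≥ 3`, the core of the Stackelberg game `(Fin n, v^seq)` is
empty: no allocation of the monopoly profit `(a-c)²/4` gives every nonempty
coalition at least its Stackelberg value. -/
theorem stmt18 (n : ℕ) (hn : 3 ≤ n) (a c : ℝ) (hc : 0 < c) (hca : c < a) :
    ¬ ∃ x : Fin n → ℝ, (∑ i, x i = (a - c) ^ 2 / 4) ∧
        ∀ S : Finset (Fin n), S.Nonempty → vseq a c n S.card ≤ ∑ i ∈ S, x i := by
  rintro ⟨x, hsum, hcore⟩
  have hD : (0:ℝ) < (a - c) ^ 2 := by nlinarith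
  have hm1 : 1 ≤ n - 1 := by omega
  -- positivity of the Bell number B (n-1)
  have hK1 : K (n - 1) 1 = 1 := K_one _ hm1
  have hB : 0 < B (n - 1) := by
    have h1 : (1:ℝ) ≤ ∑ j ∈ Finset.Icc 1 (n-1), K (n-1) j := by
      calc (1:ℝ) = K (n-1) 1 := hK1.symm
        _ ≤ _ := Finset.single_le_sum (f := fun j => K (n-1) j)
            (fun j _ => K_nonneg _ j) (Finset.mem_Icc.mpr ⟨le_refl 1, hm1⟩)
    unfold B; linarith
  have hf_nonneg : ∀ j, 0 ≤ f n 1 j := fun j => div_nonneg (K_nonneg _ _) hB.le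
  have hf1 : 0 < f n 1 1 := by
    unfold f; rw [hK1]; exact div_pos one_pos hB
  have hfsum : ∑ j ∈ Finset.Icc 1 (n-1), f n 1 j = 1 := by
    unfold f B
    rw [← Finset.sum_div, div_self]
    exact ne_of_gt (by unfold B at hB; exact hB)
  -- key strict inequality
  have key : (1:ℝ)/(4*n) < ∑ j ∈ Finset.Icc 1 (n-1), f n 1 j / (4*((j:ℝ)+1)) := by
    have hlt : ∑ j ∈ Finset.Icc 1 (n-1), f n 1 j / (4*(n:ℝ))
        < ∑ j ∈ Finset.Icc 1 (n-1), f n 1 j / (4*((j:ℝ)+1)) := by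
      apply Finset.sum_lt_sum
      · intro j hj
        have hj' := Finset.mem_Icc.mp hj
        have hjn : ((j:ℝ)+1) ≤ (n:ℝ) := by
          have : j + 1 ≤ n := by omega
          exact_mod_cast this
        gcongr
        all_goals first | exact hf_nonneg j | positivity | linarith
      · refine ⟨1, Finset.mem_Icc.mpr ⟨le_refl 1, hm1⟩, ?_⟩
        have h8 : (4:ℝ)*((1:ℕ):ℝ)+4 < 4*(n:ℝ) := by
          have : (3:ℝ) ≤ (n:ℝ) := by exact_mod_cast hn
          push_cast; linarith
        have hden : (0:ℝ) < 4*(((1:ℕ):ℝ)+1) := by norm_num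
        apply div_lt_div_of_pos_left hf1 hden
        push_cast at h8 ⊢; linarith
    calc (1:ℝ)/(4*n) = (∑ j ∈ Finset.Icc 1 (n-1), f n 1 j) / (4*(n:ℝ)) := by
          rw [hfsum]
      _ = ∑ j ∈ Finset.Icc 1 (n-1), f n 1 j / (4*(n:ℝ)) := Finset.sum_div _ _ _
      _ < _ := hlt
  -- value of singletons
  have hvseq1 : vseq a c n 1
      = (a-c)^2 * ∑ j ∈ Finset.Icc 1 (n-1), f n 1 j / (4*((j:ℝ)+1)) := by
    unfold vseq
    rw [if_neg (by omega)]
  have hv1 : ∀ i : Fin n, vseq a c n 1 ≤ x i := by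
    intro i
    have h := hcore {i} ⟨i, Finset.mem_singleton_self i⟩
    simpa using h
  have hsum1 : (n:ℝ) * vseq a c n 1 ≤ (a-c)^2/4 := by
    have h := Finset.sum_le_sum (s := Finset.univ) (fun i (_ : i ∈ Finset.univ) => hv1 i)
    rw [hsum] at h
    rw [Finset.sum_const, Finset.card_univ, Fintype.card_fin, nsmul_eq_mul] at h
    exact h
  have hn0 : (0:ℝ) < (n:ℝ) := by positivity
  have hfinal : (a-c)^2/4 < (n:ℝ) * vseq a c n 1 := by
    rw [hvseq1]
    calc (a-c)^2/4 = (n:ℝ)*(a-c)^2 * ((1:ℝ)/(4*n)) := by field_simp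
      _ < (n:ℝ)*(a-c)^2 * ∑ j ∈ Finset.Icc 1 (n-1), f n 1 j / (4*((j:ℝ)+1)) := by
          exact mul_lt_mul_of_pos_left key (by positivity)
      _ = (n:ℝ) * ((a-c)^2 * ∑ j ∈ Finset.Icc 1 (n-1), f n 1 j / (4*((j:ℝ)+1))) := by ring
  linarith
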